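/- Let 𝔞 > -1 and define W_j(x) = L_j^{2𝔞}(x) - ((j+2𝔞)/j) L_{j-1}^{2𝔞}(x) and G_j(x) = (d/dx){L_{j+1}^{2𝔞}(x) - ((j+2𝔞)/j) L_{j-1}^{2𝔞}(x)} for j ∈ ℕ. Then for every z ≥ 0 and j ∈ ℕ: ∫_0^z e^{-x/2} x^{𝔞} G_j(x) dx = 2 e^{-z/2} z^{𝔞} W_j(z). -/

import Mathlib

open Filter Real MeasureTheory

/-- Generalized binomial coefficient `C(x, m) = x(x-1)⋯(x-m+1)/m!` for `m ∈ ℕ₀`, `0` for `m < 0`. -/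
noncomputable def gchoose (x : ℝ) (m : ℤ) : ℝ :=
  if 0 ≤ m then (∏ i ∈ Finset.range m.toNat, (x - (i : ℝ))) / (Nat.factorial m.toNat : ℝ) else 0

lemma gchoose_neg (x : ℝ) {m : ℤ} (hm : m < 0) : gchoose x m = 0 := by
  simp [gchoose, not_le.mpr hm]

lemma gchoose_natCast (x : ℝ) (n : ℕ) :
    gchoose x n = (∏ i ∈ Finset.range n, (x - (i : ℝ))) / (Nat.factorial n : ℝ) := by
  simp [gchoose]

lemma gchoose_absorb (x : ℝ) (m : ℤ) :
    (m : ℝ) * gchoose x m = (x - m + 1) * gchoose x (m - 1) := by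
  rcases m with n | n
  · rcases n with _ | n
    · rw [show ((Int.ofNat 0 : ℤ) : ℝ) = 0 by simp, zero_mul,
        gchoose_neg x (show (Int.ofNat 0 : ℤ) - 1 < 0 by norm_num), mul_zero]
    · have h1 : (Int.ofNat (n+1) : ℤ) - 1 = (n : ℤ) := by simp
      have h2 : (Int.ofNat (n+1) : ℤ) = ((n+1 : ℕ) : ℤ) := by simp
      rw [h1, h2, gchoose_natCast, gchoose_natCast, Finset.prod_range_succ,
        Nat.factorial_succ]
      have hf : (Nat.factorial n : ℝ) ≠ 0 := Nat.cast_ne_zero.mpr (Nat.factorial_ne_zero n)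
      have hn : ((n:ℝ) + 1) ≠ 0 := by positivity
      field_simp
      push_cast
      ring
  · have h1 : (Int.negSucc n) < 0 := Int.negSucc_lt_zero n
    have h2 : (Int.negSucc n) - 1 < 0 := by omega
    rw [gchoose_neg x h1, gchoose_neg x h2]; ring

lemma gchoose_succ_left (x : ℝ) (m : ℤ) :
    (m : ℝ) * gchoose x m = x * gchoose (x - 1) (m - 1) := by
  rcases m with n | n
  · rcases n with _ | n
    · rw [show ((Int.ofNat 0 : ℤ) : ℝ) = 0 by simp, zero_mul,
        gchoose_neg (x-1) (show (Int.ofNat 0 : ℤ) - 1 < 0 by norm_num), mul_zero]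
    · have h1 : (Int.ofNat (n+1) : ℤ) - 1 = (n : ℤ) := by simp
      have h2 : (Int.ofNat (n+1) : ℤ) = ((n+1 : ℕ) : ℤ) := by simp
      rw [h1, h2, gchoose_natCast, gchoose_natCast, Finset.prod_range_succ',
        Nat.factorial_succ]
      have hf : (Nat.factorial n : ℝ) ≠ 0 := Nat.cast_ne_zero.mpr (Nat.factorial_ne_zero n)
      have hn : ((n:ℝ) + 1) ≠ 0 := by positivity
      have hprod : ∏ i ∈ Finset.range n, (x - ((i+1 : ℕ) : ℝ)) = ∏ i ∈ Finset.range n, (x - 1 - (i:ℝ)) := by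
        apply Finset.prod_congr rfl; intro i _; push_cast; ring
      rw [hprod]
      field_simp
      push_cast
      ring
  · have h1 : (Int.negSucc n) < 0 := Int.negSucc_lt_zero n
    have h2 : (Int.negSucc n) - 1 < 0 := by omega
    rw [gchoose_neg x h1, gchoose_neg (x-1) h2]; ring

lemma gchoose_pascal (x : ℝ) (m : ℤ) :
    gchoose x m = gchoose (x - 1) m + gchoose (x - 1) (m - 1) := by
  rcases eq_or_ne m 0 with rfl | hm
  · simp [gchoose, gchoose_neg (x-1) (show (0:ℤ) - 1 < 0 by norm_num)]
  · rcases lt_or_gt_of_ne hm with h | h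
    · rw [gchoose_neg x h, gchoose_neg (x-1) h, gchoose_neg (x-1) (by omega : m - 1 < 0)]
      ring
    · have hm0 : (m : ℝ) ≠ 0 := by exact_mod_cast (by omega : m ≠ 0)
      apply mul_left_cancel₀ hm0
      rw [gchoose_succ_left x m, mul_add, gchoose_absorb (x-1) m]
      ring


lemma mid_alg (α c j k1 X' Y Z A X : ℝ) (hj : j ≠ 0) (hc : c * j = j + α)
    (hQ : (j - k1) * Z = (α + k1) * Y) (hA : A = X' + X) (hX : X = Z + Y) :
    k1 * (A - c * Y) = (α + 2 * k1) * (X - c * Y) + k1 * (X' - c * Z) := by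
  subst hA hX
  apply mul_left_cancel₀ hj
  linear_combination (-α) * hQ + (k1 * Z + (α + k1) * Y) * hc


noncomputable def wc (a : ℝ) (j l : ℕ) : ℝ :=
  (-1 : ℝ) ^ l / (Nat.factorial l : ℝ) *
    (gchoose ((j : ℝ) + 2 * a) ((j : ℤ) - l)
      - (((j : ℝ) + 2 * a) / (j : ℝ)) * gchoose ((j : ℝ) - 1 + 2 * a) ((j : ℤ) - 1 - l))

noncomputable def uc (a : ℝ) (j l : ℕ) : ℝ :=
  (-1 : ℝ) ^ l / (Nat.factorial l : ℝ) *
    (gchoose ((j : ℝ) + 1 + 2 * a) ((j : ℤ) + 1 - l)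
      - (((j : ℝ) + 2 * a) / (j : ℝ)) * gchoose ((j : ℝ) - 1 + 2 * a) ((j : ℤ) - 1 - l))

lemma wc_zero (a : ℝ) {j : ℕ} (hj : 1 ≤ j) : wc a j 0 = 0 := by
  have hj0 : (j : ℝ) ≠ 0 := Nat.cast_ne_zero.mpr (by omega)
  have hQ := gchoose_succ_left ((j : ℝ) + 2 * a) (j : ℤ)
  rw [show ((j : ℝ) + 2 * a) - 1 = (j : ℝ) - 1 + 2 * a by ring] at hQ
  unfold wc
  rw [show ((j:ℤ) - (0:ℕ)) = (j:ℤ) by simp, show ((j:ℤ) - 1 - (0:ℕ)) = (j:ℤ) - 1 by simp,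
    show (((j:ℤ) : ℝ)) = (j:ℝ) by push_cast; rfl] at *
  field_simp
  linear_combination hQ

lemma wc_top (a : ℝ) (j : ℕ) : wc a j (j + 1) = 0 := by
  unfold wc
  rw [gchoose_neg _ (by push_cast; omega : (j:ℤ) - ((j:ℕ)+1 : ℕ) < 0),
    gchoose_neg _ (by push_cast; omega : (j:ℤ) - 1 - ((j:ℕ)+1 : ℕ) < 0)]
  ring

lemma key_coeff (a : ℝ) {j : ℕ} (hj : 1 ≤ j) (l : ℕ) :
    ((l : ℝ) + 1) * uc a j (l + 1)
      = (2 * a + 2 * ((l : ℝ) + 1)) * wc a j (l + 1) - wc a j l := by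
  have hj0 : (j : ℝ) ≠ 0 := Nat.cast_ne_zero.mpr (by omega)
  have hA := gchoose_pascal ((j : ℝ) + 1 + 2 * a) ((j : ℤ) - (l : ℤ))
  rw [show ((j : ℝ) + 1 + 2 * a) - 1 = (j : ℝ) + 2 * a by ring,
    show ((j:ℤ) - (l:ℤ)) - 1 = (j:ℤ) - 1 - (l : ℤ) by ring] at hA
  have hX := gchoose_pascal ((j : ℝ) + 2 * a) ((j : ℤ) - 1 - (l : ℤ))
  rw [show ((j : ℝ) + 2 * a) - 1 = (j : ℝ) - 1 + 2 * a by ring,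
    show ((j:ℤ) - 1 - (l:ℤ)) - 1 = (j:ℤ) - 2 - (l : ℤ) by ring] at hX
  have hQ' := gchoose_absorb ((j : ℝ) - 1 + 2 * a) ((j : ℤ) - 1 - (l : ℤ))
  rw [show ((j:ℤ) - 1 - (l:ℤ)) - 1 = (j:ℤ) - 2 - (l : ℤ) by ring,
    show (((j:ℤ) - 1 - (l:ℤ) : ℤ) : ℝ) = (j:ℝ) - 1 - (l:ℝ) by push_cast; ring] at hQ'
  have hQ : ((j:ℝ) - ((l:ℝ)+1)) * gchoose ((j : ℝ) - 1 + 2 * a) ((j : ℤ) - 1 - (l : ℤ))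
      = (2*a + ((l:ℝ)+1)) * gchoose ((j : ℝ) - 1 + 2 * a) ((j : ℤ) - 2 - (l : ℤ)) := by
    linear_combination hQ'
  unfold uc wc
  rw [show ((j:ℤ) + 1 - ((l+1:ℕ):ℤ)) = (j:ℤ) - (l : ℤ) by push_cast; ring,
    show ((j:ℤ) - 1 - ((l+1:ℕ):ℤ)) = (j:ℤ) - 2 - (l : ℤ) by push_cast; ring,
    show ((j:ℤ) - ((l+1:ℕ):ℤ)) = (j:ℤ) - 1 - (l : ℤ) by push_cast; ring]
  generalize hgc : ((j : ℝ) + 2 * a) / (j : ℝ) = c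
  have hc : c * (j:ℝ) = (j:ℝ) + 2 * a := by rw [← hgc]; field_simp
  have mid := mid_alg (2*a) c (j:ℝ) ((l:ℝ)+1)
    (gchoose ((j : ℝ) + 2 * a) ((j : ℤ) - (l:ℤ)))
    (gchoose ((j : ℝ) - 1 + 2 * a) ((j : ℤ) - 2 - (l:ℤ)))
    (gchoose ((j : ℝ) - 1 + 2 * a) ((j : ℤ) - 1 - (l:ℤ)))
    (gchoose ((j : ℝ) + 1 + 2 * a) ((j : ℤ) - (l:ℤ)))
    (gchoose ((j : ℝ) + 2 * a) ((j : ℤ) - 1 - (l:ℤ)))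
    hj0 hc hQ hA hX
  have hfac : ((Nat.factorial (l+1) : ℝ)) = ((l:ℝ)+1) * (Nat.factorial l : ℝ) := by
    rw [Nat.factorial_succ]; push_cast; ring
  have hf0 : (Nat.factorial l : ℝ) ≠ 0 := Nat.cast_ne_zero.mpr (Nat.factorial_ne_zero l)
  have hl0 : ((l:ℝ) + 1) ≠ 0 := by positivity
  rw [hfac, pow_succ]
  field_simp
  linear_combination (-1 : ℝ) * mid


/-- Generalized Laguerre polynomial `L_j^α(x) = Σ_{ℓ=0}^j ((-1)^ℓ/ℓ!) C(j+α, j-ℓ) x^ℓ`. -/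
noncomputable def lagL (j : ℕ) (α : ℝ) : ℝ → ℝ :=
  fun x => ∑ l ∈ Finset.range (j + 1),
    ((-1 : ℝ) ^ l / (Nat.factorial l : ℝ)) * gchoose ((j : ℝ) + α) ((j : ℤ) - l) * x ^ l

lemma lagL_pred (a : ℝ) {j : ℕ} (hj : 1 ≤ j) (x : ℝ) :
    lagL (j - 1) (2 * a) x = ∑ l ∈ Finset.range j,
      ((-1 : ℝ) ^ l / (Nat.factorial l : ℝ)) *
        gchoose ((j : ℝ) - 1 + 2 * a) ((j : ℤ) - 1 - l) * x ^ l := by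
  unfold lagL
  rw [Nat.sub_add_cancel hj]
  apply Finset.sum_congr rfl
  intro l _
  rw [show (((j-1 : ℕ) : ℝ) + 2 * a) = (j : ℝ) - 1 + 2 * a by
      rw [Nat.cast_sub hj, Nat.cast_one],
    show (((j-1 : ℕ) : ℤ) - (l:ℤ)) = (j : ℤ) - 1 - l by omega]

lemma W_eq (a : ℝ) {j : ℕ} (hj : 1 ≤ j) (x : ℝ) :
    lagL j (2 * a) x - (((j : ℝ) + 2 * a) / (j : ℝ)) * lagL (j - 1) (2 * a) x
      = ∑ l ∈ Finset.range (j + 1), wc a j l * x ^ l := by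
  rw [lagL_pred a hj x]
  unfold lagL
  have hext : ∑ l ∈ Finset.range j,
      ((-1 : ℝ) ^ l / (Nat.factorial l : ℝ)) *
        gchoose ((j : ℝ) - 1 + 2 * a) ((j : ℤ) - 1 - l) * x ^ l
      = ∑ l ∈ Finset.range (j + 1),
      ((-1 : ℝ) ^ l / (Nat.factorial l : ℝ)) *
        gchoose ((j : ℝ) - 1 + 2 * a) ((j : ℤ) - 1 - l) * x ^ l := by
    rw [Finset.sum_range_succ, gchoose_neg _ (by omega : (j:ℤ) - 1 - (j:ℕ) < 0)]
    ring
  rw [hext, Finset.mul_sum, ← Finset.sum_sub_distrib]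
  apply Finset.sum_congr rfl
  intro l _
  unfold wc
  ring

lemma U_eq (a : ℝ) {j : ℕ} (hj : 1 ≤ j) (x : ℝ) :
    lagL (j + 1) (2 * a) x - (((j : ℝ) + 2 * a) / (j : ℝ)) * lagL (j - 1) (2 * a) x
      = ∑ l ∈ Finset.range (j + 2), uc a j l * x ^ l := by
  rw [lagL_pred a hj x]
  unfold lagL
  have hext : ∑ l ∈ Finset.range j,
      ((-1 : ℝ) ^ l / (Nat.factorial l : ℝ)) *
        gchoose ((j : ℝ) - 1 + 2 * a) ((j : ℤ) - 1 - l) * x ^ l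
      = ∑ l ∈ Finset.range (j + 2),
      ((-1 : ℝ) ^ l / (Nat.factorial l : ℝ)) *
        gchoose ((j : ℝ) - 1 + 2 * a) ((j : ℤ) - 1 - l) * x ^ l := by
    rw [Finset.sum_range_succ, Finset.sum_range_succ,
      gchoose_neg _ (by push_cast; omega : (j:ℤ) - 1 - ((j:ℕ)+1 : ℕ) < 0),
      gchoose_neg _ (by omega : (j:ℤ) - 1 - (j:ℕ) < 0)]
    ring
  rw [hext, Finset.mul_sum, ← Finset.sum_sub_distrib]
  apply Finset.sum_congr rfl
  intro l _
  unfold uc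
  rw [show (((j+1 : ℕ) : ℝ) + 2 * a) = (j : ℝ) + 1 + 2 * a by push_cast; ring,
    show (((j+1 : ℕ) : ℤ) - (l:ℤ)) = (j : ℤ) + 1 - l by push_cast; ring]
  ring

lemma polyid (a : ℝ) {j : ℕ} (hj : 1 ≤ j) (x : ℝ) :
    x * (∑ l ∈ Finset.range (j + 2), uc a j l * ((l : ℝ) * x ^ (l - 1)))
      = (2 * a - x) * (∑ l ∈ Finset.range (j + 1), wc a j l * x ^ l)
        + 2 * (x * (∑ l ∈ Finset.range (j + 1), wc a j l * ((l : ℝ) * x ^ (l - 1)))) := by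
  have hmono : ∀ (u : ℝ) (l : ℕ), x * (u * ((l : ℝ) * x ^ (l - 1))) = (l : ℝ) * u * x ^ l := by
    intro u l
    cases l with
    | zero => simp
    | succ n => rw [Nat.add_sub_cancel]; push_cast; ring
  have hGsum : x * (∑ l ∈ Finset.range (j + 2), uc a j l * ((l : ℝ) * x ^ (l - 1)))
      = ∑ l ∈ Finset.range (j + 2), (l : ℝ) * uc a j l * x ^ l := by
    rw [Finset.mul_sum]; exact Finset.sum_congr rfl fun l _ => hmono (uc a j l) l
  have hDsum : x * (∑ l ∈ Finset.range (j + 1), wc a j l * ((l : ℝ) * x ^ (l - 1)))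
      = ∑ l ∈ Finset.range (j + 1), (l : ℝ) * wc a j l * x ^ l := by
    rw [Finset.mul_sum]; exact Finset.sum_congr rfl fun l _ => hmono (wc a j l) l
  rw [hGsum, hDsum]
  have hL : ∑ l ∈ Finset.range (j + 2), (l : ℝ) * uc a j l * x ^ l
      = ∑ l ∈ Finset.range (j + 1),
          ((2 * a + 2 * ((l : ℝ) + 1)) * wc a j (l + 1) - wc a j l) * x ^ (l + 1) := by
    rw [Finset.sum_range_succ' (fun l => (l : ℝ) * uc a j l * x ^ l) (j + 1)]
    simp only [Nat.cast_zero, zero_mul, add_zero]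
    apply Finset.sum_congr rfl
    intro l _
    rw [show ((l + 1 : ℕ) : ℝ) = (l : ℝ) + 1 by push_cast; ring, key_coeff a hj l]
  have hR : (2 * a - x) * (∑ l ∈ Finset.range (j + 1), wc a j l * x ^ l)
        + 2 * (∑ l ∈ Finset.range (j + 1), (l : ℝ) * wc a j l * x ^ l)
      = ∑ l ∈ Finset.range (j + 1), (2 * a + 2 * (l : ℝ)) * wc a j l * x ^ l
        - ∑ l ∈ Finset.range (j + 1), wc a j l * x ^ (l + 1) := by
    rw [Finset.mul_sum, Finset.mul_sum, ← Finset.sum_sub_distrib, ← Finset.sum_add_distrib]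
    apply Finset.sum_congr rfl
    intro l _
    ring
  rw [hL, hR]
  have h1 : ∑ l ∈ Finset.range (j + 1), (2 * a + 2 * (l : ℝ)) * wc a j l * x ^ l
      = ∑ l ∈ Finset.range (j + 1), (2 * a + 2 * ((l : ℝ) + 1)) * wc a j (l + 1) * x ^ (l + 1) := by
    have : ∑ l ∈ Finset.range (j + 2), (2 * a + 2 * (l : ℝ)) * wc a j l * x ^ l
        = ∑ l ∈ Finset.range (j + 1), (2 * a + 2 * (l : ℝ)) * wc a j l * x ^ l := by
      rw [Finset.sum_range_succ, wc_top a j]; ring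
    rw [← this, Finset.sum_range_succ' (fun l => (2 * a + 2 * (l : ℝ)) * wc a j l * x ^ l) (j + 1)]
    rw [wc_zero a hj]
    simp only [Nat.cast_zero, mul_zero, zero_mul, pow_zero, add_zero]
    apply Finset.sum_congr rfl
    intro l _
    rw [show ((l + 1 : ℕ) : ℝ) = (l : ℝ) + 1 by push_cast; ring]
  rw [h1, ← Finset.sum_sub_distrib]
  apply Finset.sum_congr rfl
  intro l _
  ring


theorem G_integral_formula (a : ℝ) (ha : -1 < a) (j : ℕ) (hj : 1 ≤ j) (z : ℝ) (hz : 0 ≤ z) :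
    ∫ x in (0 : ℝ)..z, Real.exp (-x / 2) * x ^ a *
        deriv (fun y : ℝ =>
          lagL (j + 1) (2 * a) y - (((j : ℝ) + 2 * a) / (j : ℝ)) * lagL (j - 1) (2 * a) y) x
      = 2 * Real.exp (-z / 2) * z ^ a *
          (lagL j (2 * a) z - (((j : ℝ) + 2 * a) / (j : ℝ)) * lagL (j - 1) (2 * a) z) := by
  set c : ℝ := ((j : ℝ) + 2 * a) / (j : ℝ) with hc
  -- the antiderivative
  set F : ℝ → ℝ := fun y => 2 * Real.exp (-y / 2) * y ^ a *
      (lagL j (2 * a) y - c * lagL (j - 1) (2 * a) y) with hFdef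
  -- derivative of the bracket
  have hUderiv : ∀ x : ℝ, HasDerivAt
      (fun y : ℝ => lagL (j + 1) (2 * a) y - c * lagL (j - 1) (2 * a) y)
      (∑ l ∈ Finset.range (j + 2), uc a j l * ((l : ℝ) * x ^ (l - 1))) x := by
    intro x
    have heq : (fun y : ℝ => lagL (j + 1) (2 * a) y - c * lagL (j - 1) (2 * a) y)
        = fun y => ∑ l ∈ Finset.range (j + 2), uc a j l * y ^ l :=
      funext fun y => U_eq a hj y
    rw [heq]
    exact HasDerivAt.fun_sum fun l _ => (hasDerivAt_pow l x).const_mul (uc a j l)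
  have hWderiv : ∀ x : ℝ, HasDerivAt
      (fun y : ℝ => ∑ l ∈ Finset.range (j + 1), wc a j l * y ^ l)
      (∑ l ∈ Finset.range (j + 1), wc a j l * ((l : ℝ) * x ^ (l - 1))) x := by
    intro x
    exact HasDerivAt.fun_sum fun l _ => (hasDerivAt_pow l x).const_mul (wc a j l)
  have hWfun : (fun y : ℝ => lagL j (2 * a) y - c * lagL (j - 1) (2 * a) y)
      = fun y => ∑ l ∈ Finset.range (j + 1), wc a j l * y ^ l :=
    funext fun y => W_eq a hj y
  -- derivative of F on (0, z)
  have hF : ∀ x ∈ Set.Ioo (0 : ℝ) z, HasDerivAt F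
      (Real.exp (-x / 2) * x ^ a *
        deriv (fun y : ℝ =>
          lagL (j + 1) (2 * a) y - c * lagL (j - 1) (2 * a) y) x) x := by
    intro x hx
    have hx0 : x ≠ 0 := ne_of_gt hx.1
    have h0 : HasDerivAt (fun y : ℝ => -y / 2) (-1 / 2 : ℝ) x := by
      simpa using ((hasDerivAt_id x).neg.div_const 2)
    have hE : HasDerivAt (fun y : ℝ => Real.exp (-y / 2))
        (Real.exp (-x / 2) * (-1 / 2)) x := h0.exp
    have hP : HasDerivAt (fun y : ℝ => y ^ a) (a * x ^ (a - 1)) x :=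
      Real.hasDerivAt_rpow_const (Or.inl hx0)
    have hW : HasDerivAt (fun y : ℝ => lagL j (2 * a) y - c * lagL (j - 1) (2 * a) y)
        (∑ l ∈ Finset.range (j + 1), wc a j l * ((l : ℝ) * x ^ (l - 1))) x := by
      rw [hWfun]; exact hWderiv x
    have hh := ((hE.const_mul (2 : ℝ)).mul hP).mul hW
    rw [(hUderiv x).deriv]
    refine HasDerivAt.congr_deriv hh (Eq.symm ?_)
    simp only [Pi.mul_apply]
    have hxa : x ^ a = x ^ (a - 1) * x := by
      rw [← Real.rpow_add_one hx0 (a - 1), sub_add_cancel]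
    rw [W_eq a hj x, hxa]
    linear_combination (Real.exp (-x / 2) * x ^ (a - 1)) * polyid a hj x
  -- integrability of the integrand
  have hGcont : Continuous (fun x : ℝ =>
      ∑ l ∈ Finset.range (j + 2), uc a j l * ((l : ℝ) * x ^ (l - 1))) := by
    apply continuous_finset_sum
    intro l _
    exact continuous_const.mul (continuous_const.mul (continuous_pow (l - 1)))
  have hint : IntervalIntegrable (fun x : ℝ => Real.exp (-x / 2) * x ^ a *
      deriv (fun y : ℝ =>
        lagL (j + 1) (2 * a) y - c * lagL (j - 1) (2 * a) y) x) volume 0 z := by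
    have hie : (fun x : ℝ => Real.exp (-x / 2) * x ^ a *
        deriv (fun y : ℝ =>
          lagL (j + 1) (2 * a) y - c * lagL (j - 1) (2 * a) y) x)
        = fun x : ℝ => (Real.exp (-x / 2) *
            (∑ l ∈ Finset.range (j + 2), uc a j l * ((l : ℝ) * x ^ (l - 1)))) * x ^ a := by
      funext x
      rw [(hUderiv x).deriv]
      ring
    rw [hie]
    exact (intervalIntegral.intervalIntegrable_rpow' (by linarith)).continuousOn_mul
      ((Real.continuous_exp.comp (continuous_id.neg.div_const 2)).mul hGcont).continuousOn
  have hexp2 : Continuous fun y : ℝ => 2 * Real.exp (-y / 2) := by fun_prop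
  rcases eq_or_lt_of_le hz with rfl | hz'
  · rw [intervalIntegral.integral_same, W_eq a hj 0,
      Finset.sum_range_succ' (fun l => wc a j l * (0:ℝ) ^ l) j]
    simp [wc_zero a hj]
  · -- limits
    have hV : ∀ x : ℝ, (∑ l ∈ Finset.range (j + 1), wc a j l * x ^ l)
        = x * (∑ l ∈ Finset.range j, wc a j (l + 1) * x ^ l) := by
      intro x
      rw [Finset.sum_range_succ' (fun l => wc a j l * x ^ l) j, wc_zero a hj, Finset.mul_sum]
      simp only [zero_mul, add_zero, pow_zero, mul_zero]
      apply Finset.sum_congr rfl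
      intro l _
      ring
    have hVcont : Continuous (fun x : ℝ => ∑ l ∈ Finset.range j, wc a j (l + 1) * x ^ l) := by
      apply continuous_finset_sum
      intro l _
      exact continuous_const.mul (continuous_pow l)
    have ha1 : (0 : ℝ) < a + 1 := by linarith
    have tr : Tendsto (fun y : ℝ => y ^ (a + 1)) (nhdsWithin 0 (Set.Ioi 0)) (nhds 0) := by
      have hcont := (Real.continuousAt_rpow_const 0 (a + 1) (Or.inr ha1.le)).tendsto
      rw [Real.zero_rpow (ne_of_gt ha1)] at hcont
      exact hcont.mono_left nhdsWithin_le_nhds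
    have texp : Tendsto (fun y : ℝ => 2 * Real.exp (-y / 2)) (nhdsWithin 0 (Set.Ioi 0))
        (nhds (2 * Real.exp (-0 / 2))) :=
      (hexp2.tendsto 0).mono_left nhdsWithin_le_nhds
    have tV : Tendsto (fun y : ℝ => ∑ l ∈ Finset.range j, wc a j (l + 1) * y ^ l)
        (nhdsWithin 0 (Set.Ioi 0))
        (nhds (∑ l ∈ Finset.range j, wc a j (l + 1) * (0:ℝ) ^ l)) :=
      hVcont.continuousAt.tendsto.mono_left nhdsWithin_le_nhds
    have htend0 : Tendsto F (nhdsWithin 0 (Set.Ioi 0)) (nhds 0) := by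
      have hcomb := (texp.mul tr).mul tV
      rw [mul_zero, zero_mul] at hcomb
      apply hcomb.congr'
      apply eventuallyEq_of_mem self_mem_nhdsWithin
      intro y hy
      have hy0 : (y : ℝ) ≠ 0 := ne_of_gt hy
      rw [hFdef]
      simp only
      rw [W_eq a hj y, hV y, Real.rpow_add_one hy0 a]
      ring
    have htendz : Tendsto F (nhdsWithin z (Set.Iio z)) (nhds (F z)) := by
      have hz0 : z ≠ 0 := ne_of_gt hz'
      have hcF : ContinuousAt F z := by
        rw [hFdef]
        apply ContinuousAt.mul
        apply ContinuousAt.mul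
        · exact hexp2.continuousAt
        · exact Real.continuousAt_rpow_const z a (Or.inl hz0)
        · rw [hWfun]
          exact (continuous_finset_sum _ fun l _ =>
            continuous_const.mul (continuous_pow l)).continuousAt
      exact hcF.continuousWithinAt
    have hmain := intervalIntegral.integral_eq_sub_of_hasDerivAt_of_tendsto hz' hF hint
      htend0 htendz
    rw [hmain, hFdef]
    ring
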